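/- Let i, j ∈ {1,…,R} and suppose that α(m,j) · γ(m,i) = 0 for all m ∈ {1,…,M} (no species of the reactant complex of step j participates in step i except as a direct catalyst). Then for every x ∈ ℝ^M, [g_i, g_j](x) = −κ_{i,j}(x) · x^{α(·,j)} • γ(·,i). (Lemma 3, case 2.) -/

import Mathlib

/-- The vector field of the `r`-th reaction step: `g_r(x) = x^{α(·,r)} • γ(·,r)`. -/
noncomputable def reactionVF (M R : ℕ) (α : Fin M → Fin R → ℕ)
    (γ : Matrix (Fin M) (Fin R) ℝ) (r : Fin R) (x : Fin M → ℝ) : Fin M → ℝ :=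
  (∏ m, x m ^ α m r) • fun m => γ m r

/-- The Lie bracket of two vector fields on `ℝ^M`:
`[φ,ψ](x) = Dψ(x)(φ(x)) − Dφ(x)(ψ(x))`. -/
noncomputable def lieBracket {M : ℕ} (φ ψ : (Fin M → ℝ) → (Fin M → ℝ))
    (x : Fin M → ℝ) : Fin M → ℝ :=
  fderiv ℝ ψ x (φ x) - fderiv ℝ φ x (ψ x)

/-- `d_m^i(x) = 0` if `α(m,i) = 0`, and `d_m^i(x) = x^{α(·,i) − e_m}` otherwise. -/
noncomputable def dmi (M R : ℕ) (α : Fin M → Fin R → ℕ) (i : Fin R) (m : Fin M)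
    (x : Fin M → ℝ) : ℝ :=
  if α m i = 0 then 0 else ∏ l, x l ^ (α l i - if l = m then 1 else 0)

/-- `κ_{i,j}(x) = ∑_m α(m,i) γ(m,j) d_m^i(x)`. -/
noncomputable def kappa (M R : ℕ) (α : Fin M → Fin R → ℕ)
    (γ : Matrix (Fin M) (Fin R) ℝ) (i j : Fin R) (x : Fin M → ℝ) : ℝ :=
  ∑ m, (α m i : ℝ) * γ m j * dmi M R α i m x

open ContinuousLinearMap in
lemma hasFDerivAt_prod_pow (M : ℕ) (a : Fin M → ℕ) (x : Fin M → ℝ) :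
    HasFDerivAt (fun y : Fin M → ℝ => ∏ m, y m ^ a m)
      (∑ m, ((∏ l ∈ Finset.univ.erase m, x l ^ a l) * ((a m : ℝ) * x m ^ (a m - 1))) •
        (ContinuousLinearMap.proj m : (Fin M → ℝ) →L[ℝ] ℝ)) x := by
  have h := HasFDerivAt.finset_prod (u := Finset.univ)
    (g := fun m (y : Fin M → ℝ) => y m ^ a m)
    (g' := fun m => ((a m : ℝ) * x m ^ (a m - 1)) •
      (ContinuousLinearMap.proj m : (Fin M → ℝ) →L[ℝ] ℝ))
    (x := x) (fun m _ => (hasDerivAt_pow (a m) (x m)).comp_hasFDerivAt x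
      ((ContinuousLinearMap.proj m : (Fin M → ℝ) →L[ℝ] ℝ)).hasFDerivAt)
  refine h.congr_fderiv (Finset.sum_congr rfl fun m _ => ?_)
  rw [smul_smul]

open ContinuousLinearMap in
lemma hasFDerivAt_reactionVF (M R : ℕ) (α : Fin M → Fin R → ℕ)
    (γ : Matrix (Fin M) (Fin R) ℝ) (r : Fin R) (x : Fin M → ℝ) :
    HasFDerivAt (reactionVF M R α γ r)
      ((∑ m, ((∏ l ∈ Finset.univ.erase m, x l ^ α l r) * ((α m r : ℝ) * x m ^ (α m r - 1))) •
        (ContinuousLinearMap.proj m : (Fin M → ℝ) →L[ℝ] ℝ)).smulRight (fun m => γ m r)) x :=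
  (hasFDerivAt_prod_pow M (fun m => α m r) x).smul_const _

lemma coeff_eq_dmi (M R : ℕ) (α : Fin M → Fin R → ℕ) (r : Fin R) (m : Fin M)
    (x : Fin M → ℝ) :
    (∏ l ∈ Finset.univ.erase m, x l ^ α l r) * ((α m r : ℝ) * x m ^ (α m r - 1)) =
      (α m r : ℝ) * dmi M R α r m x := by
  unfold dmi
  by_cases h : α m r = 0
  · simp [h]
  · rw [if_neg h]
    have : (∏ l, x l ^ (α l r - if l = m then 1 else 0)) =
        (x m ^ (α m r - 1)) * ∏ l ∈ Finset.univ.erase m, x l ^ α l r := by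
      rw [← Finset.mul_prod_erase (a := m) _ _ (Finset.mem_univ m)]
      congr 1
      · simp
      · exact Finset.prod_congr rfl fun l hl => by
          rw [if_neg (Finset.mem_erase.mp hl).1, Nat.sub_zero]
    rw [this]; ring

/-- Lemma 3, case 2: if no species of the reactant complex of step `j`
participates in step `i` except as a direct catalyst, then
`[g_i, g_j](x) = −κ_{i,j}(x) x^{α(·,j)} • γ(·,i)`. -/
theorem lieBracket_reactionVF_case2 (M R : ℕ) (α : Fin M → Fin R → ℕ)
    (γ : Matrix (Fin M) (Fin R) ℝ) (i j : Fin R)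
    (hji : ∀ m, (α m j : ℝ) * γ m i = 0) :
    ∀ x : Fin M → ℝ,
      lieBracket (reactionVF M R α γ i) (reactionVF M R α γ j) x =
        -((kappa M R α γ i j x * ∏ m, x m ^ α m j) • (fun m => γ m i : Fin M → ℝ)) := by
  intro x
  have hi := hasFDerivAt_reactionVF M R α γ i x
  have hj := hasFDerivAt_reactionVF M R α γ j x
  unfold lieBracket
  rw [hi.fderiv, hj.fderiv]
  have key : ∀ (r s : Fin R),
      ((∑ m, ((∏ l ∈ Finset.univ.erase m, x l ^ α l r) *
          ((α m r : ℝ) * x m ^ (α m r - 1))) •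
        (ContinuousLinearMap.proj m : (Fin M → ℝ) →L[ℝ] ℝ)).smulRight
          (fun m => γ m r)) (reactionVF M R α γ s x) =
      ((∏ m, x m ^ α m s) * ∑ m, (α m r : ℝ) * dmi M R α r m x * γ m s) •
        (fun m => γ m r : Fin M → ℝ) := by
    intro r s
    rw [ContinuousLinearMap.smulRight_apply]
    congr 1
    simp only [ContinuousLinearMap.coe_sum', Finset.sum_apply,
      ContinuousLinearMap.coe_smul', Pi.smul_apply, ContinuousLinearMap.proj_apply,
      smul_eq_mul, reactionVF, Pi.smul_apply]
    rw [Finset.mul_sum]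
    refine Finset.sum_congr rfl fun m _ => ?_
    rw [coeff_eq_dmi]
    ring
  rw [key j i, key i j]
  have h1 : (∑ m, (α m j : ℝ) * dmi M R α j m x * γ m i) = 0 := by
    refine Finset.sum_eq_zero fun m _ => ?_
    have := hji m
    calc (α m j : ℝ) * dmi M R α j m x * γ m i
        = dmi M R α j m x * ((α m j : ℝ) * γ m i) := by ring
      _ = 0 := by rw [this, mul_zero]
  rw [h1, mul_zero, zero_smul, zero_sub]
  congr 1
  unfold kappa
  congr 1
  rw [mul_comm]
  congr 1
  exact Finset.sum_congr rfl fun m _ => by ring
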